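/- arXiv:0807.1079 — 5 statements merged into one kernel-verified Lean document; each statement's English description precedes it below -/
import Mathlib

section
/- In the group W = ℤ ≀ ℤ, the centralizer of a equals the cyclic subgroup ⟨a⟩ generated by a, and the centralizer of b equals the base subgroup H. -/
noncomputable section

namespace ZWrZ

/-- The base group of the restricted wreath product `ℤ ≀ ℤ`: the direct sum
`⨁_{k ∈ ℤ} ℤ`, written multiplicatively. -/
abbrev WBase : Type := Multiplicative (ℤ →₀ ℤ)

/-- The shift-by-one automorphism of the base group, sending `f` to `k ↦ f (k - 1)`. -/
def shiftOne : MulAut WBase :=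
  AddEquiv.toMultiplicative (Finsupp.domCongr (Equiv.addRight (1 : ℤ)))

/-- The action of `ℤ` on the base group by shifting indices: `n` acts as the `n`-th power
of the shift-by-one automorphism. -/
def wreathAction : Multiplicative ℤ →* MulAut WBase :=
  zpowersHom (MulAut WBase) shiftOne

/-- The restricted wreath product `W = ℤ ≀ ℤ`, realized as the semidirect product
`(⨁_{k∈ℤ} ℤ) ⋊ ℤ` in which `ℤ` acts on the direct sum by shifting indices. -/
abbrev W : Type := WBase ⋊[wreathAction] Multiplicative ℤ

/-- The element `a = (0, 1)` of `W`: the generator of the acting copy of `ℤ`. -/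
def aW : W := SemidirectProduct.inr (Multiplicative.ofAdd (1 : ℤ))

/-- The element `b = (e₀, 0)` of `W`: the standard generator of the index-`0` summand of
the base. -/
def bW : W := SemidirectProduct.inl (Multiplicative.ofAdd (Finsupp.single (0 : ℤ) (1 : ℤ)))

/-- The base subgroup `H = {(h, 0)} ≤ W`. -/
def HW : Subgroup W := (SemidirectProduct.inl : WBase →* W).range

end ZWrZ

namespace ZWrZ

lemma shiftOne_apply (f : WBase) (k : ℤ) :
    Multiplicative.toAdd (shiftOne f) k = Multiplicative.toAdd f (k - 1) := by
  simp [shiftOne, Finsupp.domCongr, sub_eq_add_neg]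

lemma shiftOne_inv_apply (f : WBase) (k : ℤ) :
    Multiplicative.toAdd (shiftOne⁻¹ f) k = Multiplicative.toAdd f (k + 1) := by
  have h := shiftOne_apply (shiftOne⁻¹ f) (k + 1)
  simp only [add_sub_cancel_right, MulAut.apply_inv_self] at h
  exact h.symm

lemma shiftOne_zpow_apply (n : ℤ) (f : WBase) (k : ℤ) :
    Multiplicative.toAdd ((shiftOne ^ n) f) k = Multiplicative.toAdd f (k - n) := by
  induction n using Int.induction_on generalizing f with
  | zero => simp
  | succ m ih =>
    have h : (shiftOne ^ ((m : ℤ) + 1)) f = (shiftOne ^ (m : ℤ)) (shiftOne f) := by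
      rw [zpow_add_one, MulAut.mul_apply]
    rw [h, ih, shiftOne_apply]
    ring_nf
  | pred m ih =>
    have h : (shiftOne ^ (-(m : ℤ) - 1)) f = (shiftOne ^ (-(m : ℤ))) (shiftOne⁻¹ f) := by
      rw [zpow_sub_one, MulAut.mul_apply]
    rw [h, ih, shiftOne_inv_apply]
    ring_nf

lemma wreathAction_apply (n : ℤ) (f : WBase) (k : ℤ) :
    Multiplicative.toAdd ((wreathAction (Multiplicative.ofAdd n)) f) k
      = Multiplicative.toAdd f (k - n) := by
  have : wreathAction (Multiplicative.ofAdd n) = shiftOne ^ n := by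
    simp [wreathAction]
  rw [this, shiftOne_zpow_apply]

lemma periodic_eq_zero (f : ℤ →₀ ℤ) (h : ∀ k, f k = f (k - 1)) : f = 0 := by
  by_contra hf
  obtain ⟨x, hx⟩ : ∃ x, f x ≠ 0 := by
    by_contra h'
    push_neg at h'
    exact hf (Finsupp.ext h')
  have key : ∀ m : ℕ, f (x + m) = f x := by
    intro m
    induction m with
    | zero => simp
    | succ p ih => rw [← ih]; have := h (x + (p + 1 : ℕ)); push_cast at this ⊢; rw [this]; ring_nf
  have hinf : (↑f.support : Set ℤ).Infinite := by
    apply Set.infinite_of_injective_forall_mem (f := fun m : ℕ => x + (m : ℤ))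
    · intro a b hab; simpa using hab
    · intro m; simp [Finsupp.mem_support_iff, key m, hx]
  exact hinf f.support.finite_toSet

/-- In `W = ℤ ≀ ℤ`, the centralizer of `a` equals the cyclic subgroup
`⟨a⟩`, and the centralizer of `b` equals the base subgroup `H`. -/
theorem centralizer_a_eq_zpowers_and_centralizer_b_eq_base :
    Subgroup.centralizer ({aW} : Set W) = Subgroup.zpowers aW ∧
    Subgroup.centralizer ({bW} : Set W) = HW := by
  constructor
  · ext x
    rw [Subgroup.mem_centralizer_iff]
    constructor
    · intro hc
      have h := hc aW (Set.mem_singleton aW)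
      have hl : (aW * x).left = (x * aW).left := by rw [h]
      simp only [SemidirectProduct.mul_left, aW, SemidirectProduct.left_inr,
        SemidirectProduct.right_inr, map_one, mul_one, one_mul] at hl
      have hz : Multiplicative.toAdd x.left = 0 := by
        apply periodic_eq_zero
        intro k
        have := congrArg (fun g : WBase => Multiplicative.toAdd g k) hl
        rw [wreathAction_apply] at this
        exact this.symm
      have hx1 : x.left = 1 := by
        have := congrArg Multiplicative.ofAdd hz
        simpa using this
      refine ⟨Multiplicative.toAdd x.right, ?_⟩
      have : aW ^ (Multiplicative.toAdd x.right) =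
          SemidirectProduct.inr (Multiplicative.ofAdd (1 : ℤ) ^ (Multiplicative.toAdd x.right)) := by
        rw [aW, map_zpow]
      have hx : x = SemidirectProduct.inr x.right := by
        conv_lhs => rw [← SemidirectProduct.inl_left_mul_inr_right x]
        rw [hx1, map_one, one_mul]
      show aW ^ (Multiplicative.toAdd x.right) = x
      rw [this, hx]
      congr 1
      rw [← ofAdd_zsmul]
      simp
    · rintro ⟨n, rfl⟩ g hg
      rw [Set.mem_singleton_iff] at hg
      subst hg
      exact ((Commute.refl aW).zpow_right n)
  · ext x
    rw [Subgroup.mem_centralizer_iff]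
    constructor
    · intro hc
      have h := hc bW (Set.mem_singleton bW)
      have hl : (bW * x).left = (x * bW).left := by rw [h]
      simp only [SemidirectProduct.mul_left, bW, SemidirectProduct.left_inl,
        SemidirectProduct.right_inl, map_one, MulAut.one_apply] at hl
      have h0 := congrArg (fun g : WBase => Multiplicative.toAdd g (0 : ℤ)) hl
      simp only [toAdd_mul, Finsupp.add_apply] at h0
      have hr : x.right = 1 := by
        set n := Multiplicative.toAdd x.right with hn
        have hxr : x.right = Multiplicative.ofAdd n := rfl
        rw [hxr, wreathAction_apply] at h0
        simp only [toAdd_ofAdd, Finsupp.single_apply, if_true] at h0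
        have : n = 0 := by split_ifs at h0 with hcase <;> omega
        rw [hxr, this]; rfl
      exact ⟨x.left, by ext <;> simp [SemidirectProduct.left_inl, SemidirectProduct.right_inl, hr]⟩
    · rintro ⟨f, rfl⟩ g hg
      rw [Set.mem_singleton_iff] at hg
      subst hg
      rw [bW, ← map_mul, ← map_mul, mul_comm]

end ZWrZ
end
end

section
/- In the group W = ℤ ≀ ℤ: (1) for every integer n, the set of products H·C_W(b·aⁿ) = {h·c : h ∈ H, c ∈ C_W(b·aⁿ)} equals the set of products H·⟨aⁿ⟩; and (2) for all integers m, n: m divides n if and only if H·C_W(b·aⁿ) ⊆ H·C_W(b·aᵐ). -/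
noncomputable section

namespace ZWrZ

open Pointwise

lemma ofAdd_eq {x y : ℤ →₀ ℤ} (h : ∀ k, x k = y k) :
    Multiplicative.ofAdd x = Multiplicative.ofAdd y := congrArg _ (Finsupp.ext h)

lemma shiftOne_apply_s15 (g : ℤ →₀ ℤ) :
    shiftOne (Multiplicative.ofAdd g)
      = Multiplicative.ofAdd (Finsupp.equivMapDomain (Equiv.addRight (1:ℤ)) g) := rfl

lemma shiftOne_inv_apply_s15 (g : ℤ →₀ ℤ) :
    shiftOne⁻¹ (Multiplicative.ofAdd g)
      = Multiplicative.ofAdd (Finsupp.equivMapDomain (Equiv.addRight (-1:ℤ)) g) := by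
  have : shiftOne⁻¹ (Multiplicative.ofAdd g)
      = Multiplicative.ofAdd ((Finsupp.domCongr (Equiv.addRight (1:ℤ))).symm g) := rfl
  rw [this]
  exact ofAdd_eq (fun k => by
    simp only [Finsupp.domCongr_symm, Finsupp.domCongr_apply, Finsupp.equivMapDomain_apply,
      Equiv.addRight_symm, Equiv.coe_addRight]
    try ring_nf)

lemma shift_pow (t : ℤ) (g : ℤ →₀ ℤ) :
    (shiftOne ^ t) (Multiplicative.ofAdd g)
      = Multiplicative.ofAdd (Finsupp.equivMapDomain (Equiv.addRight t) g) := by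
  induction t using Int.induction_on generalizing g with
  | zero =>
      rw [zpow_zero, MulAut.one_apply]
      exact (ofAdd_eq (fun k => by
        simp only [Finsupp.equivMapDomain_apply, Equiv.addRight_symm, Equiv.coe_addRight]
        norm_num)).symm
  | succ t ih =>
      rw [zpow_add_one, MulAut.mul_apply, shiftOne_apply_s15, ih]
      exact ofAdd_eq (fun k => by
        simp only [Finsupp.equivMapDomain_apply, Equiv.addRight_symm, Equiv.coe_addRight]
        ring_nf)
  | pred t ih =>
      rw [zpow_sub_one, MulAut.mul_apply, shiftOne_inv_apply_s15, ih]
      exact ofAdd_eq (fun k => by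
        simp only [Finsupp.equivMapDomain_apply, Equiv.addRight_symm, Equiv.coe_addRight]
        ring_nf)

lemma right_aW_pow (n : ℤ) : (aW ^ n).right = Multiplicative.ofAdd n := by
  have : (aW ^ n).right = (aW.right) ^ n := by
    have h := map_zpow (SemidirectProduct.rightHom : W →* Multiplicative ℤ) aW n
    simpa [SemidirectProduct.rightHom_eq_right] using h
  rw [this]
  have h2 : aW.right = Multiplicative.ofAdd (1:ℤ) := rfl
  rw [h2]
  refine Multiplicative.toAdd.injective ?_
  simp

lemma right_baw (n : ℤ) : (bW * aW ^ n).right = Multiplicative.ofAdd n := by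
  rw [SemidirectProduct.mul_right, right_aW_pow]
  simp [bW]

lemma left_baw (n : ℤ) :
    (bW * aW ^ n).left = Multiplicative.ofAdd (Finsupp.single (0:ℤ) (1:ℤ)) := by
  have h1 : (aW ^ n).left = 1 := by
    have : aW ^ n = SemidirectProduct.inr ((Multiplicative.ofAdd (1:ℤ)) ^ n) := by
      simp [aW, ← map_zpow]
    rw [this, SemidirectProduct.left_inr]
  rw [SemidirectProduct.mul_left, h1]
  simp [bW]

lemma wreathAction_apply_s15 (t : Multiplicative ℤ) (x : WBase) :
    wreathAction t x = (shiftOne ^ Multiplicative.toAdd t) x := by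
  rw [wreathAction, zpowersHom_apply]

lemma centralizer_right_dvd {n : ℤ} {w : W}
    (hw : w ∈ Subgroup.centralizer ({bW * aW ^ n} : Set W)) :
    n ∣ Multiplicative.toAdd w.right := by
  have h := Subgroup.mem_centralizer_iff.mp hw (bW * aW ^ n) rfl
  have h1 := congrArg SemidirectProduct.left h
  rw [SemidirectProduct.mul_left (bW * aW ^ n) w, SemidirectProduct.mul_left w (bW * aW ^ n),
    left_baw, right_baw, wreathAction_apply_s15, wreathAction_apply_s15] at h1
  set F : ℤ →₀ ℤ := Multiplicative.toAdd w.left with hF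
  set T : ℤ := Multiplicative.toAdd w.right with hT
  have hwl : w.left = Multiplicative.ofAdd F := rfl
  rw [hwl] at h1
  rw [shift_pow, shift_pow, Finsupp.equivMapDomain_single] at h1
  simp only [toAdd_ofAdd] at h1
  -- h1 : ofAdd (single 0 1) * ofAdd (equivMapDomain (addRight n) F)
  --    = ofAdd F * ofAdd (single (0 + T) 1)
  have h2 : (Finsupp.single (0:ℤ) (1:ℤ)) + Finsupp.equivMapDomain (Equiv.addRight n) F
      = F + Finsupp.single ((0:ℤ) + T) (1:ℤ) := by
    have := congrArg Multiplicative.toAdd h1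
    simpa using this
  have h3 := congrArg (Finsupp.mapDomain (fun k : ℤ => (k : ZMod n.natAbs))) h2
  have hcomp : (fun k : ℤ => (k : ZMod n.natAbs)) ∘ (Equiv.addRight n)
      = fun k : ℤ => (k : ZMod n.natAbs) := by
    funext k
    simp only [Function.comp_apply, Equiv.coe_addRight]
    push_cast
    have : ((n : ℤ) : ZMod n.natAbs) = 0 :=
      (ZMod.intCast_zmod_eq_zero_iff_dvd n n.natAbs).mpr (Int.natAbs_dvd.mpr dvd_rfl)
    rw [this, add_zero]
  rw [Finsupp.mapDomain_add, Finsupp.mapDomain_add, Finsupp.mapDomain_single,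
    Finsupp.mapDomain_single, Finsupp.equivMapDomain_eq_mapDomain, ← Finsupp.mapDomain_comp,
    hcomp] at h3
  rw [add_comm (Finsupp.mapDomain _ F)] at h3
  have h4 := add_right_cancel h3
  rcases (Finsupp.single_eq_single_iff _ _ _ _).mp h4 with ⟨hTc, -⟩ | ⟨hbad, -⟩
  swap
  · exact absurd hbad one_ne_zero
  have : ((T : ℤ) : ZMod n.natAbs) = 0 := by
    have := hTc.symm
    push_cast at this
    simpa using this
  exact Int.natAbs_dvd.mp ((ZMod.intCast_zmod_eq_zero_iff_dvd T n.natAbs).mp this)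

open Pointwise in
lemma prod_eq (n : ℤ) (K : Subgroup W)
    (hsub : ∀ w ∈ K, n ∣ Multiplicative.toAdd w.right)
    (c : W) (hc : c ∈ K) (hcr : c.right = Multiplicative.ofAdd n) :
    (HW : Set W) * (K : Set W) = {w : W | n ∣ Multiplicative.toAdd w.right} := by
  ext x
  constructor
  · intro hx
    rw [Set.mem_mul] at hx
    obtain ⟨h, hh, k, hk, rfl⟩ := hx
    obtain ⟨f, rfl⟩ := hh
    have : (SemidirectProduct.inl f * k).right = k.right := by
      rw [SemidirectProduct.mul_right, SemidirectProduct.right_inl, one_mul]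
    rw [Set.mem_setOf_eq, this]
    exact hsub k hk
  · intro hx
    obtain ⟨q, hq⟩ := hx
    rw [Set.mem_mul]
    refine ⟨x * (c ^ q)⁻¹, ?_, c ^ q, K.zpow_mem hc q, inv_mul_cancel_right x (c ^ q)⟩
    have hmem : x * (c ^ q)⁻¹ ∈ HW := by
      rw [HW, SemidirectProduct.range_inl_eq_ker_rightHom, MonoidHom.mem_ker,
        map_mul, map_inv, map_zpow]
      have hr : SemidirectProduct.rightHom c = Multiplicative.ofAdd n := by
        rw [SemidirectProduct.rightHom_eq_right]; exact hcr
      have hx : SemidirectProduct.rightHom x = x.right := by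
        rw [SemidirectProduct.rightHom_eq_right]
      rw [hr, hx]
      refine mul_inv_eq_one.mpr (Multiplicative.toAdd.injective ?_)
      rw [toAdd_zpow, toAdd_ofAdd, hq, smul_eq_mul, mul_comm]
    exact hmem

lemma self_mem_centralizer (c : W) : c ∈ Subgroup.centralizer ({c} : Set W) :=
  Subgroup.mem_centralizer_iff.mpr (fun h hh => by
    rw [Set.mem_singleton_iff] at hh; rw [hh])

open Pointwise in
lemma key_cent (n : ℤ) :
    (HW : Set W) * (Subgroup.centralizer ({bW * aW ^ n} : Set W) : Set W)
      = {w : W | n ∣ Multiplicative.toAdd w.right} :=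
  prod_eq n _ (fun _ hw => centralizer_right_dvd hw) (bW * aW ^ n)
    (self_mem_centralizer _) (right_baw n)

open Pointwise in
lemma key_zpow (n : ℤ) :
    (HW : Set W) * (Subgroup.zpowers (aW ^ n) : Set W)
      = {w : W | n ∣ Multiplicative.toAdd w.right} := by
  refine prod_eq n _ ?_ (aW ^ n) (Subgroup.mem_zpowers _) (right_aW_pow n)
  intro w hw
  obtain ⟨q, rfl⟩ := Subgroup.mem_zpowers_iff.mp hw
  have : ((aW ^ n) ^ q).right = (Multiplicative.ofAdd n) ^ q := by
    have h := map_zpow (SemidirectProduct.rightHom : W →* Multiplicative ℤ) (aW ^ n) q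
    simp only [SemidirectProduct.rightHom_eq_right] at h
    rw [h, right_aW_pow]
  rw [this, toAdd_zpow, toAdd_ofAdd, smul_eq_mul]
  exact dvd_mul_left n q


/-- In `W = ℤ ≀ ℤ`: (1) for every integer `n`,
`H · C_W(b a^n) = H · ⟨a^n⟩` as sets of products; and (2) for all integers `m, n`:
`m ∣ n` if and only if `H · C_W(b a^n) ⊆ H · C_W(b a^m)`. -/
theorem base_mul_centralizer_eq_and_dvd_iff :
    (∀ n : ℤ,
      (HW : Set W) * (Subgroup.centralizer ({bW * aW ^ n} : Set W) : Set W)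
        = (HW : Set W) * (Subgroup.zpowers (aW ^ n) : Set W)) ∧
    (∀ m n : ℤ, m ∣ n ↔
      (HW : Set W) * (Subgroup.centralizer ({bW * aW ^ n} : Set W) : Set W)
        ⊆ (HW : Set W) * (Subgroup.centralizer ({bW * aW ^ m} : Set W) : Set W)) := by
  constructor
  · intro n
    rw [key_cent, key_zpow]
  · intro m n
    rw [key_cent, key_cent]
    constructor
    · intro hmn w hw
      exact dvd_trans hmn hw
    · intro hsub
      have han : aW ^ n ∈ {w : W | n ∣ Multiplicative.toAdd w.right} := by
        rw [Set.mem_setOf_eq, right_aW_pow, toAdd_ofAdd]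
      have := hsub han
      rwa [Set.mem_setOf_eq, right_aW_pow, toAdd_ofAdd] at this

end ZWrZ
end
end

section
/- For all integers n and k: n = k(k+1) if and only if both (i) for every integer m, n divides m if and only if (k divides m and k+1 divides m), and (ii) 2k+1 divides 2n − k. -/
/-- For all integers `n` and `k`: `n = k * (k + 1)` if and only if
(i) for every integer `m`, `n ∣ m ↔ (k ∣ m ∧ (k + 1) ∣ m)`, and
(ii) `(2 * k + 1) ∣ (2 * n - k)`. -/
theorem int_eq_mul_succ_iff_dvd_characterization (n k : ℤ) :
    n = k * (k + 1) ↔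
      ((∀ m : ℤ, n ∣ m ↔ (k ∣ m ∧ (k + 1) ∣ m)) ∧ (2 * k + 1) ∣ (2 * n - k)) := by
  have hcop : IsCoprime k (k + 1) := ⟨-1, 1, by ring⟩
  constructor
  · rintro rfl
    refine ⟨fun m => ⟨fun h => ⟨(dvd_mul_right k (k+1)).trans h,
      (dvd_mul_left (k+1) k).trans h⟩, fun ⟨h1, h2⟩ => hcop.mul_dvd h1 h2⟩, ⟨k, by ring⟩⟩
  · rintro ⟨h1, h2⟩
    have hkn : k * (k + 1) ∣ n := by
      obtain ⟨a, b⟩ := (h1 n).mp dvd_rfl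
      exact hcop.mul_dvd a b
    have hnk : n ∣ k * (k + 1) :=
      (h1 (k * (k + 1))).mpr ⟨dvd_mul_right _ _, dvd_mul_left _ _⟩
    rcases Int.associated_iff.mp (associated_of_dvd_dvd hnk hkn) with h | h
    · exact h
    · -- n = -(k*(k+1))
      have hd1 : (2 * k + 1) ∣ (1 : ℤ) := by
        have h3 : (2 * k + 1) ∣ (2 * k + 1) * (-(k + 1)) := Dvd.intro _ rfl
        have := dvd_sub h2 h3
        have heq : 2 * n - k - (2 * k + 1) * (-(k + 1)) = 1 := by rw [h]; ring
        rwa [heq] at this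
      rcases Int.isUnit_iff.mp (isUnit_of_dvd_one hd1) with hk | hk <;>
        · have : k = 0 ∨ k = -1 := by omega
          rcases this with rfl | rfl <;> simp [h]
end

section
/- For all α, β ∈ A with 0 < α < β < r, there exist x, y ∈ F(r,Λ,A) with supp(x) = supp(y) = (α, β) and x ∘ y ≠ y ∘ x; consequently, the centralizer of the set {x, y} in the subgroup F_{(α,β)}(r,Λ,A) is trivial. -/
open Set Filter Topology

noncomputable section

/-- The multiplicative group of positive real numbers. -/
abbrev PosReal : Type := {x : ℝ // 0 < x}

namespace ThompsonStein

/-- The support of a permutation of `ℝ`: the set of non-fixed points. -/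
def supp (f : Equiv.Perm ℝ) : Set ℝ := {t | f t ≠ t}

/-- The fixed-point set of a permutation of `ℝ`. -/
def fixSet (f : Equiv.Perm ℝ) : Set ℝ := {t | f t = t}

/-- Membership in the Stein–Thompson group `F(r, Λ, A)`, where elements of the group of
piecewise affine homeomorphisms of `[0, r)` are encoded as the permutations of `ℝ` fixing
every point outside `[0, r)`.  The conditions say: `f` fixes the complement of `[0, r)`
(so it restricts to a bijection of `[0, r)`), it is strictly increasing and continuous on
`[0, r)`, and it is piecewise affine with respect to a finite subdivision
`0 = t 0 < t 1 < ⋯ < t n = r` whose points and their images lie in `A`, the slope of each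
affine piece lying in `Λ`. -/
def MemF (r : ℝ) (Λ : Subgroup PosReal) (A : AddSubgroup ℝ) (f : Equiv.Perm ℝ) : Prop :=
  (∀ t : ℝ, t ∉ Set.Ico 0 r → f t = t) ∧
  StrictMonoOn f (Set.Ico 0 r) ∧
  ContinuousOn f (Set.Ico 0 r) ∧
  ∃ n : ℕ, ∃ t : Fin (n + 1) → ℝ,
    StrictMono t ∧ t 0 = 0 ∧ t (Fin.last n) = r ∧
    (∀ i, t i ∈ A) ∧ (∀ i, f (t i) ∈ A) ∧
    ∀ i : Fin n, ∃ s : PosReal, s ∈ Λ ∧ ∃ c : ℝ,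
      ∀ u ∈ Set.Icc (t i.castSucc) (t i.succ), f u = (s : ℝ) * u + c

/-- Membership in `F_S(r, Λ, A)`: the elements of `F(r, Λ, A)` with support contained
in `S`. -/
def MemFOn (r : ℝ) (Λ : Subgroup PosReal) (A : AddSubgroup ℝ) (S : Set ℝ)
    (f : Equiv.Perm ℝ) : Prop :=
  MemF r Λ A f ∧ supp f ⊆ S

/-- `f` has right slope `s` at `γ`:  `f` is affine with slope `s` on some interval
`(γ, γ + ε)` to the right of `γ`. -/
def HasRightSlope (f : ℝ → ℝ) (γ s : ℝ) : Prop :=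
  ∃ ε > (0 : ℝ), ∃ c : ℝ, ∀ u ∈ Set.Ioo γ (γ + ε), f u = s * u + c

/-- `f` has left slope `s` at `γ`:  `f` is affine with slope `s` on some interval
`(γ - ε, γ)` to the left of `γ`. -/
def HasLeftSlope (f : ℝ → ℝ) (γ s : ℝ) : Prop :=
  ∃ ε > (0 : ℝ), ∃ c : ℝ, ∀ u ∈ Set.Ioo (γ - ε) γ, f u = s * u + c

end ThompsonStein

namespace ThompsonStein

def bumpFun (α β μ ν d : ℝ) : ℝ → ℝ := fun u =>
  max u (min (α + μ * (u - α)) (min (u + (μ - 1) * d) (β + (u - β) * ν)))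

variable {α β μ ν d : ℝ}

section Bump
variable (hμ : 1 < μ) (hν : μ * ν = 1) (hd : 0 < d) (hab : (1 + μ) * d < β - α)
include hμ hν hd hab

lemma hν0 : 0 < ν := by nlinarith
lemma hν1 : ν < 1 := by nlinarith [hν0 hμ hν hd hab]
lemma hαβ' : α < β := by nlinarith

lemma bump_eq_left {u : ℝ} (h : u ≤ α) : bumpFun α β μ ν d u = u :=
  max_eq_left ((min_le_left _ _).trans (by nlinarith))

lemma bump_eq_pieceA {u : ℝ} (h : u ∈ Icc α (α + d)) :
    bumpFun α β μ ν d u = α + μ * (u - α) := by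
  obtain ⟨h1, h2⟩ := h
  have hv0 := hν0 hμ hν hd hab
  have hv1 := hν1 hμ hν hd hab
  have e2 : α + μ * (u - α) ≤ u + (μ - 1) * d := by nlinarith
  have e3 : u + (μ - 1) * d ≤ β + (u - β) * ν := by nlinarith
  unfold bumpFun
  rw [min_eq_left (le_min e2 (e2.trans e3)), max_eq_right (by nlinarith)]

lemma bump_eq_pieceB {u : ℝ} (h : u ∈ Icc (α + d) (β - μ * d)) :
    bumpFun α β μ ν d u = u + (μ - 1) * d := by
  obtain ⟨h1, h2⟩ := h
  have hv0 := hν0 hμ hν hd hab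
  have hv1 := hν1 hμ hν hd hab
  have e3 : u + (μ - 1) * d ≤ β + (u - β) * ν := by nlinarith
  have e1 : u + (μ - 1) * d ≤ α + μ * (u - α) := by nlinarith
  unfold bumpFun
  rw [min_eq_left e3, min_eq_right e1, max_eq_right (by nlinarith)]

lemma bump_eq_pieceC {u : ℝ} (h : u ∈ Icc (β - μ * d) β) :
    bumpFun α β μ ν d u = β + (u - β) * ν := by
  obtain ⟨h1, h2⟩ := h
  have hv0 := hν0 hμ hν hd hab
  have hv1 := hν1 hμ hν hd hab
  have e3 : β + (u - β) * ν ≤ u + (μ - 1) * d := by nlinarith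
  have e1 : u + (μ - 1) * d ≤ α + μ * (u - α) := by nlinarith
  unfold bumpFun
  rw [min_eq_right e3, min_eq_right (e3.trans e1), max_eq_right (by nlinarith)]

lemma bump_eq_right {u : ℝ} (h : β ≤ u) : bumpFun α β μ ν d u = u := by
  have hv0 := hν0 hμ hν hd hab
  have hv1 := hν1 hμ hν hd hab
  exact max_eq_left ((min_le_right _ _).trans ((min_le_right _ _).trans (by nlinarith)))

lemma bump_out {u : ℝ} (h : u ∉ Ioo α β) : bumpFun α β μ ν d u = u := by
  rw [mem_Ioo, not_and_or, not_lt, not_lt] at h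
  rcases h with h | h
  · exact bump_eq_left hμ hν hd hab h
  · exact bump_eq_right hμ hν hd hab h

lemma bump_gt {u : ℝ} (h : u ∈ Ioo α β) : u < bumpFun α β μ ν d u := by
  obtain ⟨h1, h2⟩ := h
  have hv0 := hν0 hμ hν hd hab
  have hv1 := hν1 hμ hν hd hab
  have : u < min (α + μ * (u - α)) (min (u + (μ - 1) * d) (β + (u - β) * ν)) :=
    lt_min (by nlinarith) (lt_min (by nlinarith) (by nlinarith))
  exact lt_of_lt_of_le this (le_max_right _ _)

lemma bump_strictMono : StrictMono (bumpFun α β μ ν d) := by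
  have hv0 := hν0 hμ hν hd hab
  intro a b h
  exact max_lt_max h (min_lt_min (by nlinarith) (min_lt_min (by nlinarith) (by nlinarith)))

lemma bump_continuous : Continuous (bumpFun α β μ ν d) := by
  unfold bumpFun; fun_prop

lemma bump_surjective : Function.Surjective (bumpFun α β μ ν d) := by
  apply (bump_continuous hμ hν hd hab).surjective
  · exact tendsto_atTop_mono (fun u => le_max_left _ _) tendsto_id
  · apply tendsto_atBot_mono (f := fun u => u + (μ - 1) * d)
      (fun u => max_le (by show u ≤ u + (μ - 1) * d; nlinarith [mul_pos (sub_pos.2 hμ) hd]) ((min_le_right _ _).trans (min_le_left _ _)))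
    exact tendsto_atBot_add_const_right _ _ tendsto_id

end Bump

set_option maxHeartbeats 1000000 in
lemma memF_bump {α β μ ν d : ℝ} (r : ℝ) (Λ : Subgroup PosReal) (A : AddSubgroup ℝ)
    (σ : PosReal) (hσΛ : σ ∈ Λ) (hσ : (σ : ℝ) = μ)
    (hμ : 1 < μ) (hν : μ * ν = 1) (hd : 0 < d) (hab : (1 + μ) * d < β - α)
    (h0α : 0 < α) (hβr : β < r)
    (hαA : α ∈ A) (hβA : β ∈ A) (hrA : r ∈ A) (hdA : d ∈ A) (hμdA : μ * d ∈ A)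
    (f : Equiv.Perm ℝ) (hf : ⇑f = bumpFun α β μ ν d) :
    MemF r Λ A f := by
  have hv0 := hν0 hμ hν hd hab
  have hv1 := hν1 hμ hν hd hab
  have hμ0 : (0:ℝ) < μ := lt_trans one_pos hμ
  have hαβ : α < β := by nlinarith
  have hcoe1 : ((1 : PosReal) : ℝ) = 1 := rfl
  have hcoeinv : ((σ⁻¹ : PosReal) : ℝ) = ν := by
    have h1 : ((σ⁻¹ : PosReal) : ℝ) = (σ : ℝ)⁻¹ := rfl
    have h2 : ν = μ⁻¹ := eq_inv_of_mul_eq_one_left (by nlinarith)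
    rw [h1, hσ, h2]
  refine ⟨?_, ?_, ?_, 5, ![0, α, α + d, β - μ * d, β, r], ?_, rfl, rfl, ?_, ?_, ?_⟩
  · intro t ht
    rw [mem_Ico, not_and_or, not_le, not_lt] at ht
    rw [hf]
    rcases ht with ht | ht
    · exact bump_eq_left hμ hν hd hab (by linarith)
    · exact bump_eq_right hμ hν hd hab (by linarith)
  · rw [hf]; exact (bump_strictMono hμ hν hd hab).strictMonoOn _
  · rw [hf]; exact (bump_continuous hμ hν hd hab).continuousOn
  · rw [Fin.strictMono_iff_lt_succ]
    intro i
    fin_cases i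
    · show (0:ℝ) < α; exact h0α
    · show α < α + d; linarith
    · show α + d < β - μ * d; nlinarith
    · show β - μ * d < β; nlinarith [mul_pos hμ0 hd]
    · show β < r; exact hβr
  · intro i
    fin_cases i
    exacts [zero_mem A, hαA, add_mem hαA hdA, sub_mem hβA hμdA, hβA, hrA]
  · intro i
    fin_cases i
    · show f 0 ∈ A
      rw [hf, bump_eq_left hμ hν hd hab h0α.le]; exact zero_mem A
    · show f α ∈ A
      rw [hf, bump_eq_left hμ hν hd hab le_rfl]; exact hαA
    · show f (α + d) ∈ A
      rw [hf, bump_eq_pieceA hμ hν hd hab ⟨by linarith, le_rfl⟩]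
      have e : α + μ * (α + d - α) = α + μ * d := by ring
      rw [e]; exact add_mem hαA hμdA
    · show f (β - μ * d) ∈ A
      rw [hf, bump_eq_pieceB hμ hν hd hab ⟨by nlinarith, le_rfl⟩]
      have e : β - μ * d + (μ - 1) * d = β - d := by ring
      rw [e]; exact sub_mem hβA hdA
    · show f β ∈ A
      rw [hf, bump_eq_right hμ hν hd hab le_rfl]; exact hβA
    · show f r ∈ A
      rw [hf, bump_eq_right hμ hν hd hab hβr.le]; exact hrA
  · intro i
    fin_cases i
    · exact ⟨1, one_mem _, 0, fun u hu => by
        rw [hf, bump_eq_left hμ hν hd hab (hu.2 : u ≤ α), hcoe1]; ring⟩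
    · exact ⟨σ, hσΛ, α - μ * α, fun u hu => by
        obtain ⟨h1, h2⟩ := hu
        rw [hf, bump_eq_pieceA hμ hν hd hab ⟨h1, h2⟩, hσ]; ring⟩
    · exact ⟨1, one_mem _, (μ - 1) * d, fun u hu => by
        obtain ⟨h1, h2⟩ := hu
        rw [hf, bump_eq_pieceB hμ hν hd hab ⟨h1, h2⟩, hcoe1]; ring⟩
    · exact ⟨σ⁻¹, inv_mem hσΛ, β - β * ν, fun u hu => by
        obtain ⟨h1, h2⟩ := hu
        rw [hf, bump_eq_pieceC hμ hν hd hab ⟨h1, h2⟩, hcoeinv]; ring⟩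
    · exact ⟨1, one_mem _, 0, fun u hu => by
        rw [hf, bump_eq_right hμ hν hd hab (hu.1 : β ≤ u), hcoe1]; ring⟩


section Helpers
open Function

lemma posreal_coe_pow (a : PosReal) (k : ℕ) : ((a ^ k : PosReal) : ℝ) = (a : ℝ) ^ k := by
  induction k with
  | zero => rfl
  | succ m ih => rw [pow_succ, pow_succ, ← ih]; rfl


lemma symm_iterate_mem_tendsto {α β : ℝ} (x : Equiv.Perm ℝ)
    (hxcont : Continuous ⇑x)
    (hxout : ∀ t ∉ Ioo α β, x t = t) (hxgt : ∀ t ∈ Ioo α β, t < x t)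
    {u : ℝ} (hu : u ∈ Ioo α β) :
    (∀ n, (⇑x.symm)^[n] u ∈ Ioo α β) ∧
      Tendsto (fun n => (⇑x.symm)^[n] u) atTop (𝓝 α) := by
  have hstep : ∀ t ∈ Ioo α β, x.symm t ∈ Ioo α β ∧ x.symm t < t := by
    intro t ht
    have hmem : x.symm t ∈ Ioo α β := by
      by_contra hc
      have h1 : x (x.symm t) = x.symm t := hxout _ hc
      rw [Equiv.apply_symm_apply] at h1
      exact hc (by rw [← h1]; exact ht)
    refine ⟨hmem, ?_⟩
    have := hxgt _ hmem
    rwa [Equiv.apply_symm_apply] at this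
  set q : ℕ → ℝ := fun n => (⇑x.symm)^[n] u with hq
  have hmem : ∀ n, q n ∈ Ioo α β := by
    intro n; induction n with
    | zero => exact hu
    | succ n ih =>
      show (⇑x.symm)^[n+1] u ∈ Ioo α β
      rw [iterate_succ_apply']
      exact (hstep _ ih).1
  have hsucc : ∀ n, q (n + 1) < q n := by
    intro n
    have : q (n+1) = x.symm (q n) := iterate_succ_apply' _ _ _
    rw [this]; exact (hstep _ (hmem n)).2
  have hanti : Antitone q := antitone_nat_of_succ_le fun n => (hsucc n).le
  have hbdd : BddBelow (Set.range q) := ⟨α, by rintro v ⟨n, rfl⟩; exact (hmem n).1.le⟩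
  have hlim := tendsto_atTop_ciInf hanti hbdd
  set M := ⨅ n, q n with hM
  have hMα : α ≤ M := le_ciInf fun n => (hmem n).1.le
  have hMβ : M < β := lt_of_le_of_lt (ciInf_le hbdd 0) hu.2
  have hxM : x M = M := by
    have h1 : Tendsto (fun n => q (n + 1)) atTop (𝓝 M) :=
      hlim.comp (tendsto_add_atTop_nat 1)
    have h2 : Tendsto (fun n => x (q (n + 1))) atTop (𝓝 (x M)) :=
      (hxcont.tendsto M).comp h1
    have h3 : (fun n => x (q (n + 1))) = fun n => q n := by
      funext n
      show x ((⇑x.symm)^[n+1] u) = q n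
      rw [iterate_succ_apply', Equiv.apply_symm_apply]
    rw [h3] at h2
    exact tendsto_nhds_unique h2 hlim
  have hMeq : M = α := by
    by_contra hc
    have : M ∈ Ioo α β := ⟨lt_of_le_of_ne hMα (Ne.symm hc), hMβ⟩
    exact absurd hxM (ne_of_gt (hxgt _ this))
  rw [hMeq] at hlim
  exact ⟨hmem, hlim⟩

lemma centralizer_elt_eq_one {α β : ℝ} (r : ℝ) (Λ : Subgroup PosReal) (A : AddSubgroup ℝ)
    (h0α : 0 < α) (hβr : β < r)
    (x z : Equiv.Perm ℝ) (hxcont : Continuous ⇑x)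
    (hxout : ∀ t ∉ Ioo α β, x t = t) (hxgt : ∀ t ∈ Ioo α β, t < x t)
    (hz : MemF r Λ A z) (hzs : ∀ t ∉ Ioo α β, z t = t)
    (hcomm : ∀ t, z (x t) = x (z t)) (p : ℝ) (hp : p ∈ Ioo α β) (hzp : z p = p) :
    z = 1 := by
  have hcs : ∀ t, z (x.symm t) = x.symm (z t) := by
    intro t
    have h := hcomm (x.symm t)
    rw [Equiv.apply_symm_apply] at h
    exact (Equiv.eq_symm_apply x).2 h.symm
  have hits : ∀ n t, z ((⇑x.symm)^[n] t) = (⇑x.symm)^[n] (z t) := by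
    intro n
    induction n with
    | zero => intro t; simp
    | succ n ih =>
      intro t
      rw [iterate_succ_apply', iterate_succ_apply', hcs, ih]
  obtain ⟨hmem, hlim⟩ := symm_iterate_mem_tendsto x hxcont hxout hxgt hp
  set q : ℕ → ℝ := fun n => (⇑x.symm)^[n] p with hqdef
  have hqfix : ∀ n, z (q n) = q n := by
    intro n
    show z ((⇑x.symm)^[n] p) = (⇑x.symm)^[n] p
    rw [hits n p, hzp]
  -- find the affine piece of z containing a right neighbourhood of α
  obtain ⟨hout', hmono', hcont', n, t, htm, ht0, htl, _, _, hpc⟩ := hz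
  have hαr : α ∈ Ico (0:ℝ) r := ⟨h0α.le, lt_trans hp.1 (lt_trans hp.2 hβr)⟩
  -- greatest index j with t j ≤ α
  have h0mem : (0 : Fin (n+1)) ∈ Finset.univ.filter (fun j : Fin (n+1) => t j ≤ α) := by
    simp [ht0, h0α.le]
  set S := Finset.univ.filter (fun j : Fin (n+1) => t j ≤ α) with hS
  have hSne : S.Nonempty := ⟨0, h0mem⟩
  set j := S.max' hSne with hj
  have hjmem : j ∈ S := S.max'_mem hSne
  have hjα : t j ≤ α := by
    have := Finset.mem_filter.1 hjmem
    exact this.2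
  have hjlt : (j : ℕ) < n := by
    rcases lt_or_eq_of_le (Fin.le_last j) with h | h
    · exact h
    · exfalso
      have : t j = r := by rw [h, htl]
      rw [this] at hjα
      linarith [hαr.2]
  set i : Fin n := ⟨(j : ℕ), hjlt⟩ with hi
  have hic : i.castSucc = j := by
    apply Fin.ext; rfl
  have hiα : t i.castSucc ≤ α := by rw [hic]; exact hjα
  have hisucc : α < t i.succ := by
    by_contra hc
    push_neg at hc
    have hmem2 : i.succ ∈ S := by simp [hS, hc]
    have := S.le_max' _ hmem2
    rw [← hj] at this
    have h2 : i.castSucc < i.succ := Fin.castSucc_lt_succ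
    rw [hic] at h2
    exact absurd (lt_of_lt_of_le h2 this) (lt_irrefl _)
  obtain ⟨s, hsΛ, c, hform⟩ := hpc i
  -- find N with q N inside the piece
  have hev : ∀ᶠ m : ℕ in atTop, q m < t i.succ := hlim.eventually (gt_mem_nhds hisucc)
  obtain ⟨N, hN⟩ := hev.exists
  have hqN1 : q (N + 1) < q N := by
    have e : (⇑x.symm)^[N+1] p = x.symm (q N) := iterate_succ_apply' _ _ _
    have hmm : x.symm (q N) ∈ Ioo α β := e ▸ hmem (N+1)
    have h2 := hxgt _ hmm
    rw [Equiv.apply_symm_apply] at h2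
    show (⇑x.symm)^[N+1] p < q N
    rw [iterate_succ_apply']
    exact h2
  have hmemIcc : ∀ m, q m < t i.succ → q m ∈ Icc (t i.castSucc) (t i.succ) :=
    fun m hm => ⟨le_trans hiα (hmem m).1.le, hm.le⟩
  have h1 : (s : ℝ) * q N + c = q N := by
    rw [← hform (q N) (hmemIcc N hN)]; exact hqfix N
  have h2 : (s : ℝ) * q (N+1) + c = q (N+1) := by
    rw [← hform (q (N+1)) (hmemIcc (N+1) (lt_trans hqN1 hN))]; exact hqfix (N+1)
  have hne : q N - q (N + 1) ≠ 0 := sub_ne_zero.2 (ne_of_gt hqN1)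
  have hs1 : (s : ℝ) = 1 := by
    have hz0 : ((s : ℝ) - 1) * (q N - q (N+1)) = 0 := by linear_combination h1 - h2
    rcases mul_eq_zero.1 hz0 with h | h
    · linarith [sub_eq_zero.1 h]
    · exact absurd h hne
  have hc0 : c = 0 := by
    rw [hs1, one_mul] at h1; linarith
  have hzone : ∀ v ∈ Icc (t i.castSucc) (t i.succ), z v = v := by
    intro v hv
    rw [hform v hv, hs1, hc0]; ring
  -- propagate
  apply Equiv.ext
  intro u
  show z u = u
  by_cases hu : u ∈ Ioo α β
  · obtain ⟨hmem', hlim'⟩ := symm_iterate_mem_tendsto x hxcont hxout hxgt hu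
    obtain ⟨N', hN'⟩ := (hlim'.eventually (gt_mem_nhds hisucc)).exists
    have hfix' : z ((⇑x.symm)^[N'] u) = (⇑x.symm)^[N'] u :=
      hzone _ ⟨le_trans hiα (hmem' N').1.le, hN'.le⟩
    rw [hits N' u] at hfix'
    exact (x.symm.injective.iterate N') hfix'
  · exact hzs _ hu

end Helpers


lemma memF_one (r : ℝ) (hr : 0 < r) (Λ : Subgroup PosReal) (A : AddSubgroup ℝ)
    (hrA : r ∈ A) : MemF r Λ A 1 := by
  have hone : ∀ u : ℝ, (1 : Equiv.Perm ℝ) u = u := fun u => rfl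
  refine ⟨fun t _ => hone t, ?_, ?_, 1, ![0, r], ?_, rfl, rfl, ?_, ?_, ?_⟩
  · intro a _ b _ h
    rw [hone, hone]; exact h
  · have : ⇑(1 : Equiv.Perm ℝ) = id := rfl
    rw [this]; exact continuous_id.continuousOn
  · rw [Fin.strictMono_iff_lt_succ]
    intro i
    fin_cases i
    show (0:ℝ) < r; exact hr
  · intro i
    fin_cases i
    exacts [zero_mem A, hrA]
  · intro i
    rw [hone]
    fin_cases i
    exacts [zero_mem A, hrA]
  · intro i
    fin_cases i
    exact ⟨1, one_mem _, 0, fun u _ => by rw [hone]; show u = 1 * u + 0; ring⟩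

set_option maxHeartbeats 1000000 in
/-- For all `α, β ∈ A` with `0 < α < β < r`, there exist
`x, y ∈ F(r, Λ, A)` with `supp x = supp y = (α, β)` and `x ∘ y ≠ y ∘ x`; consequently the
centralizer of `{x, y}` in the subgroup `F_{(α,β)}(r, Λ, A)` is trivial. -/
theorem exists_noncommuting_pair_with_trivial_centralizer
    (r : ℝ) (hr : 0 < r) (Λ : Subgroup PosReal) (hΛ : Λ ≠ ⊥)
    (A : AddSubgroup ℝ) (hrA : r ∈ A)
    (hΛA : ∀ s : PosReal, s ∈ Λ → ∀ a : ℝ, a ∈ A → (s : ℝ) * a ∈ A)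
    (α β : ℝ) (hαA : α ∈ A) (hβA : β ∈ A)
    (h0α : 0 < α) (hαβ : α < β) (hβr : β < r) :
    ∃ x y : Equiv.Perm ℝ, MemF r Λ A x ∧ MemF r Λ A y ∧
      supp x = Set.Ioo α β ∧ supp y = Set.Ioo α β ∧
      x * y ≠ y * x ∧
      {z : Equiv.Perm ℝ | MemFOn r Λ A (Set.Ioo α β) z ∧ Commute z x ∧ Commute z y}
        = {1} := by
  classical
  -- choose a slope σ ∈ Λ with 1 < σ
  obtain ⟨s₀, hs₀⟩ := Subgroup.ne_bot_iff_exists_ne_one.1 hΛ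
  have hs₀pos : (0:ℝ) < ((s₀ : PosReal) : ℝ) := (s₀ : PosReal).2
  have hs₀ne1 : ((s₀ : PosReal) : ℝ) ≠ 1 := by
    intro h
    apply hs₀
    apply Subtype.ext
    apply Subtype.ext
    exact h
  obtain ⟨σ, hσΛ, hσ1⟩ : ∃ σ : PosReal, σ ∈ Λ ∧ 1 < (σ : ℝ) := by
    rcases lt_or_gt_of_ne hs₀ne1 with h | h
    · refine ⟨(s₀ : PosReal)⁻¹, inv_mem (SetLike.coe_mem s₀), ?_⟩
      have h1 : (((s₀ : PosReal)⁻¹ : PosReal) : ℝ) = ((s₀ : PosReal) : ℝ)⁻¹ := rfl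
      rw [h1]
      have h2 : ((s₀ : PosReal) : ℝ) * ((s₀ : PosReal) : ℝ)⁻¹ = 1 :=
        mul_inv_cancel₀ (ne_of_gt hs₀pos)
      nlinarith [inv_pos.2 hs₀pos]
    · exact ⟨(s₀ : PosReal), SetLike.coe_mem s₀, h⟩
  set μ : ℝ := (σ : ℝ) with hμdef
  have hμ0 : (0:ℝ) < μ := σ.2
  set ν : ℝ := μ⁻¹ with hνdef
  have hν : μ * ν = 1 := mul_inv_cancel₀ (ne_of_gt hμ0)
  have hν0' : 0 < ν := inv_pos.2 hμ0
  have hν1' : ν < 1 := by nlinarith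
  -- choose the bump parameter d
  obtain ⟨k, hk⟩ := pow_unbounded_of_one_lt (1 + μ) hσ1
  set d : ℝ := ν ^ k * (β - α) with hddef
  have hνk0 : 0 < ν ^ k := pow_pos hν0' k
  have hd : 0 < d := mul_pos hνk0 (sub_pos.2 hαβ)
  have hνμk : ν ^ k * μ ^ k = 1 := by
    rw [← mul_pow, inv_mul_cancel₀ (ne_of_gt hμ0), one_pow]
  have hab : (1 + μ) * d < β - α := by
    have h1 : (1 + μ) * ν ^ k < μ ^ k * ν ^ k :=
      mul_lt_mul_of_pos_right hk hνk0
    have h2 : (1 + μ) * ν ^ k < 1 := by nlinarith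
    nlinarith [sub_pos.2 hαβ]
  have hdA : d ∈ A := by
    have h1 := hΛA (σ⁻¹ ^ k) (pow_mem (inv_mem hσΛ) k) (β - α) (sub_mem hβA hαA)
    have h2 : (((σ⁻¹ ^ k : PosReal)) : ℝ) = ν ^ k := posreal_coe_pow σ⁻¹ k
    rwa [h2] at h1
  have hμdA : μ * d ∈ A := by
    have h1 := hΛA σ hσΛ d hdA
    exact h1
  -- the second parameter d' = ν * d
  set d' : ℝ := ν * d with hd'def
  have hd'0 : 0 < d' := mul_pos hν0' hd
  have hd'lt : d' < d := by nlinarith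
  have hab' : (1 + μ) * d' < β - α := by nlinarith
  have hd'A : d' ∈ A := by
    have h1 := hΛA σ⁻¹ (inv_mem hσΛ) d hdA
    exact h1
  have hμd' : μ * d' = d := by rw [hd'def, ← mul_assoc, hν, one_mul]
  have hμd'A : μ * d' ∈ A := by rw [hμd']; exact hdA
  -- construct the two bumps
  set x : Equiv.Perm ℝ := Equiv.ofBijective (bumpFun α β μ ν d)
    ⟨(bump_strictMono hσ1 hν hd hab).injective, bump_surjective hσ1 hν hd hab⟩ with hxdef
  set y : Equiv.Perm ℝ := Equiv.ofBijective (bumpFun α β μ ν d')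
    ⟨(bump_strictMono hσ1 hν hd'0 hab').injective, bump_surjective hσ1 hν hd'0 hab'⟩ with hydef
  have hx : ⇑x = bumpFun α β μ ν d := rfl
  have hy : ⇑y = bumpFun α β μ ν d' := rfl
  have hxF : MemF r Λ A x :=
    memF_bump r Λ A σ hσΛ rfl hσ1 hν hd hab h0α hβr hαA hβA hrA hdA hμdA x hx
  have hyF : MemF r Λ A y :=
    memF_bump r Λ A σ hσΛ rfl hσ1 hν hd'0 hab' h0α hβr hαA hβA hrA hd'A hμd'A y hy
  have hsuppx : supp x = Set.Ioo α β := by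
    ext u
    simp only [supp, Set.mem_setOf_eq]
    constructor
    · intro h
      by_contra hc
      exact h (by rw [hx]; exact bump_out hσ1 hν hd hab hc)
    · intro h
      rw [hx]
      exact ne_of_gt (bump_gt hσ1 hν hd hab h)
  have hsuppy : supp y = Set.Ioo α β := by
    ext u
    simp only [supp, Set.mem_setOf_eq]
    constructor
    · intro h
      by_contra hc
      exact h (by rw [hy]; exact bump_out hσ1 hν hd'0 hab' hc)
    · intro h
      rw [hy]
      exact ne_of_gt (bump_gt hσ1 hν hd'0 hab' h)
  -- key facts about x and y at α + d
  have hαd'β : α + d' < β := by nlinarith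
  have hαdβ : α + d < β := by nlinarith
  have hxad : x (α + d) = α + μ * d := by
    rw [hx, bump_eq_pieceA hσ1 hν hd hab ⟨by linarith, le_rfl⟩]
    ring
  have hyad : y (α + d) = (α + d) + (μ - 1) * d' := by
    rw [hy, bump_eq_pieceB hσ1 hν hd'0 hab' ⟨by linarith, by rw [hμd']; nlinarith⟩]
  have hxyad : x (α + d) ≠ y (α + d) := by
    rw [hxad, hyad]
    have : (α + μ * d) - ((α + d) + (μ - 1) * d') = d * (μ - 1) * (1 - ν) := by
      rw [hd'def]; ring
    intro h
    have h2 : d * (μ - 1) * (1 - ν) = 0 := by rw [← this, h]; ring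
    nlinarith [mul_pos (mul_pos hd (sub_pos.2 hσ1)) (sub_pos.2 hν1')]
  have hagree : ∀ t : ℝ, t ≤ α + d' → x t = y t := by
    intro t ht
    by_cases h : t ≤ α
    · rw [hx, hy, bump_eq_left hσ1 hν hd hab h, bump_eq_left hσ1 hν hd'0 hab' h]
    · push_neg at h
      rw [hx, hy, bump_eq_pieceA hσ1 hν hd hab ⟨h.le, by linarith⟩,
        bump_eq_pieceA hσ1 hν hd'0 hab' ⟨h.le, ht⟩]
  -- the key triviality statement
  have key : ∀ z : Equiv.Perm ℝ, MemF r Λ A z → supp z ⊆ Set.Ioo α β →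
      Commute z x → Commute z y → z = 1 := by
    intro z hzF hzs hzx hzy
    have hzout : ∀ t, t ∉ Set.Ioo α β → z t = t := by
      intro t ht
      by_contra hc
      exact ht (hzs hc)
    set w : Equiv.Perm ℝ := y⁻¹ * x with hwdef
    have hwz : Commute z w := (hzy.inv_right).mul_right hzx
    have hwapp : ∀ t, w t = y.symm (x t) := fun t => rfl
    have hcw : ∀ t, z (w t) = w (z t) := by
      intro t
      have h := congrArg (fun g : Equiv.Perm ℝ => g t) hwz
      simpa [Equiv.Perm.mul_apply] using h
    have hwfix : ∀ t, t ∉ Set.Ioo α β ∩ Set.Ioi (α + d') → w t = t := by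
      intro t ht
      rw [Set.mem_inter_iff, not_and_or] at ht
      rw [hwapp]
      rcases ht with ht | ht
      · have h1 : x t = t := by rw [hx]; exact bump_out hσ1 hν hd hab ht
        have h2 : y t = t := by rw [hy]; exact bump_out hσ1 hν hd'0 hab' ht
        rw [h1, ← h2, Equiv.symm_apply_apply]
        exact h2.symm
      · have ht' : t ≤ α + d' := le_of_not_gt ht
        rw [hagree t ht', Equiv.symm_apply_apply]
    have hsuppw : supp w ⊆ Set.Ioo α β ∩ Set.Ioi (α + d') := by
      intro t ht
      by_contra hc
      exact ht (hwfix t hc)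
    have hadS : α + d ∈ supp w := by
      simp only [supp, Set.mem_setOf_eq, hwapp]
      intro h
      apply hxyad
      have := congrArg (⇑y) h
      rwa [Equiv.apply_symm_apply] at this
    have hSne : (supp w).Nonempty := ⟨α + d, hadS⟩
    have hbdd : BddBelow (supp w) := ⟨α + d', fun t ht => le_of_lt (hsuppw ht).2⟩
    set p : ℝ := sInf (supp w) with hpdef
    have hpge : α + d' ≤ p := le_csInf hSne fun t ht => le_of_lt (hsuppw ht).2
    have hple : p ≤ α + d := csInf_le hbdd hadS
    have hpIoo : p ∈ Set.Ioo α β := ⟨by linarith, by linarith⟩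
    have hIoosub : Set.Ioo α β ⊆ Set.Ico 0 r := fun t ht =>
      ⟨le_of_lt (lt_trans h0α ht.1), lt_trans ht.2 hβr⟩
    have hzmono : StrictMonoOn ⇑z (Set.Ico 0 r) := hzF.2.1
    have hzIoo : ∀ t ∈ Set.Ioo α β, z t ∈ Set.Ioo α β := by
      intro t ht
      by_contra hc
      have h1 : z (z t) = z t := hzout _ hc
      have h2 : z t = t := z.injective h1
      rw [h2] at hc
      exact hc ht
    have hzsymmIoo : ∀ t ∈ Set.Ioo α β, z.symm t ∈ Set.Ioo α β := by
      intro t ht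
      by_contra hc
      have h1 : z (z.symm t) = z.symm t := hzout _ hc
      rw [Equiv.apply_symm_apply] at h1
      rw [← h1] at hc
      exact hc ht
    have hinv1 : ∀ t ∈ supp w, z t ∈ supp w := by
      intro t ht
      simp only [supp, Set.mem_setOf_eq] at ht ⊢
      intro hc
      apply ht
      apply z.injective
      rw [← hc, hcw]
    have hinv2 : ∀ t ∈ supp w, z.symm t ∈ supp w := by
      intro t ht
      simp only [supp, Set.mem_setOf_eq] at ht ⊢
      intro hc
      have h1 := hcw (z.symm t)
      rw [hc, Equiv.apply_symm_apply] at h1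
      exact ht h1.symm
    have hzp : z p = p := by
      by_contra hne
      rcases lt_or_gt_of_ne hne with hlt | hgt
      · -- z p < p ; then p < z.symm p
        have h1 : z.symm p ∈ Set.Ioo α β := hzsymmIoo p hpIoo
        have h2 : p < z.symm p := by
          by_contra hc
          push_neg at hc
          rcases eq_or_lt_of_le hc with h | h
          · have := congrArg (⇑z) h
            rw [Equiv.apply_symm_apply] at this
            exact absurd this.symm (ne_of_lt hlt)
          · have h3 := hzmono (hIoosub h1) (hIoosub hpIoo) h
            rw [Equiv.apply_symm_apply] at h3
            linarith
        obtain ⟨q, hqS, hq⟩ := exists_lt_of_csInf_lt hSne h2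
        have hqIoo : q ∈ Set.Ioo α β := (hsuppw hqS).1
        have hq2 : z q ∈ supp w := hinv1 _ hqS
        have hq3 : z q < p := by
          have h3 := hzmono (hIoosub hqIoo) (hIoosub h1) hq
          rwa [Equiv.apply_symm_apply] at h3
        exact absurd (csInf_le hbdd hq2) (not_le.2 hq3)
      · -- p < z p
        obtain ⟨q, hqS, hq⟩ := exists_lt_of_csInf_lt hSne hgt
        have hqIoo : q ∈ Set.Ioo α β := (hsuppw hqS).1
        have hq2 : z.symm q ∈ supp w := hinv2 _ hqS
        have hq3 : z.symm q < p := by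
          have h1 : z.symm q ∈ Set.Ioo α β := hzsymmIoo q hqIoo
          by_contra hc
          push_neg at hc
          rcases eq_or_lt_of_le hc with h | h
          · have := congrArg (⇑z) h
            rw [Equiv.apply_symm_apply] at this
            rw [this] at hq
            exact absurd hq (lt_irrefl _)
          · have h3 := hzmono (hIoosub hpIoo) (hIoosub h1) h
            rw [Equiv.apply_symm_apply] at h3
            linarith
        exact absurd (csInf_le hbdd hq2) (not_le.2 hq3)
    have hcommt : ∀ t, z (x t) = x (z t) := by
      intro t
      have h := congrArg (fun g : Equiv.Perm ℝ => g t) hzx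
      simpa [Equiv.Perm.mul_apply] using h
    exact centralizer_elt_eq_one r Λ A h0α hβr x z
      (by rw [hx]; exact bump_continuous hσ1 hν hd hab)
      (fun t ht => by rw [hx]; exact bump_out hσ1 hν hd hab ht)
      (fun t ht => by rw [hx]; exact bump_gt hσ1 hν hd hab ht)
      hzF hzout hcommt p hpIoo hzp
  refine ⟨x, y, hxF, hyF, hsuppx, hsuppy, ?_, ?_⟩
  · -- x * y ≠ y * x
    intro h
    have hy1 : y = 1 := by
      apply key y hyF (by rw [hsuppy])
      · exact h.symm
      · exact Commute.refl y
    have h1 : y (α + d) = α + d := by rw [hy1]; rfl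
    rw [hyad] at h1
    nlinarith [mul_pos (sub_pos.2 hσ1) hd'0]
  · -- the centralizer is trivial
    apply Set.eq_singleton_iff_unique_mem.2
    constructor
    · refine ⟨⟨memF_one r hr Λ A hrA, ?_⟩, Commute.one_left x, Commute.one_left y⟩
      intro t ht
      exact absurd rfl ht
    · rintro z ⟨⟨hzF, hzs⟩, hzx, hzy⟩
      exact key z hzF hzs hzx hzy

end ThompsonStein
end
end

section
/- Let L be a first-order language with encodable sets of symbols, and fix the induced encoding of L-sentences into ℕ. Let T be an L-theory, and suppose there is a sentence θ ∈ T such that the theory Cn(θ) = {φ : every model of θ satisfies φ} is essentially undecidable. Then T is hereditarily undecidable: every L-theory T′ with T′ ⊆ T is undecidable. -/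
open FirstOrder

namespace EssentialUndecidability

variable {L : FirstOrder.Language}

section

variable [∀ n, Encodable (L.Functions n)] [∀ n, Encodable (L.Relations n)]

/-- The encoding of `L`-sentences into `ℕ` induced by the encodings of the symbols of `L`:
a sentence is encoded as the code of the list of symbols `listEncode φ`. -/
noncomputable def sentenceCode (φ : L.Sentence) : ℕ :=
  Encodable.encode (FirstOrder.Language.BoundedFormula.listEncode φ)

/-- A set of `L`-sentences is decidable if the set of natural-number codes of its elements
is a computable subset of `ℕ`. -/
noncomputable def DecidableSentenceSet (S : Set L.Sentence) : Prop :=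
  ComputablePred (fun n : ℕ => n ∈ sentenceCode '' S)

end

/-- `T` is an `L`-theory in the sense of the paper: a satisfiable, deductively closed set
of `L`-sentences. -/
def IsClosedTheory (T : L.Theory) : Prop :=
  T.IsSatisfiable ∧ ∀ φ : L.Sentence, T.ModelsBoundedFormula φ → φ ∈ T

/-- The set of consequences of a single sentence `θ`: the sentences true in every model
of `θ`. -/
def Cn (θ : L.Sentence) : L.Theory :=
  {φ : L.Sentence | ({θ} : L.Theory).ModelsBoundedFormula φ}

section

variable [∀ n, Encodable (L.Functions n)] [∀ n, Encodable (L.Relations n)]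

/-- A theory `T₀` is essentially undecidable if every `L`-theory containing it is
undecidable. -/
noncomputable def EssentiallyUndecidable (T₀ : L.Theory) : Prop :=
  ∀ T' : L.Theory, IsClosedTheory T' → T₀ ⊆ T' → ¬ DecidableSentenceSet T'

end

/-! ### Auxiliary lemmas -/

open FirstOrder.Language List

open FirstOrder.Language.BoundedFormula in
/-- `listDecode` decodes an encoded formula prepended to any list, as in the internal
argument of `FirstOrder.Language.BoundedFormula.listDecode_encode_list`. -/
theorem aux_listDecode_append {α : Type*} (φ : Σ n, L.BoundedFormula α n)
    (l' : List ((Σk, L.Term (α ⊕ Fin k)) ⊕ ((Σn, L.Relations n) ⊕ ℕ))) :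
    listDecode (listEncode φ.2 ++ l') = φ :: listDecode l' := by
  obtain ⟨n, φ⟩ := φ
  induction φ generalizing l' with
  | falsum => rw [listEncode, singleton_append, listDecode]
  | equal =>
    rw [listEncode, cons_append, cons_append, listDecode, dif_pos]
    · simp only [eq_mp_eq_cast, cast_eq, eq_self_iff_true, heq_iff_eq, and_self_iff, nil_append]
    · simp only [eq_self_iff_true, heq_iff_eq, and_self_iff]
  | @rel φ_n φ_l φ_R ts =>
    rw [listEncode, cons_append, cons_append, singleton_append, cons_append, listDecode]
    have h : ∀ i : Fin φ_l, ((List.map Sum.getLeft? (List.map (fun i : Fin φ_l =>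
      Sum.inl (⟨(⟨φ_n, rel φ_R ts⟩ : Σn, L.BoundedFormula α n).fst, ts i⟩ :
        Σn, L.Term (α ⊕ (Fin n)))) (finRange φ_l) ++ l'))[↑i]?).join = some ⟨_, ts i⟩ := by
      intro i
      simp only [Option.join, map_append, map_map, Fin.getElem?_fin, id, Option.bind_eq_some_iff,
        List.getElem?_eq_some_iff, length_append, length_map, length_finRange, exists_eq_right]
      refine ⟨lt_of_lt_of_le i.2 le_self_add, ?_⟩
      rw [getElem_append_left, getElem_map]
      · simp only [getElem_finRange, Fin.cast_mk, Fin.eta, Function.comp_apply, Sum.getLeft?_inl]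
      · simp only [length_map, length_finRange, Fin.is_lt]
    rw [dif_pos]
    swap
    · exact fun i => Option.isSome_iff_exists.2 ⟨⟨_, ts i⟩, h i⟩
    rw [dif_pos]
    swap
    · intro i
      obtain ⟨h1, h2⟩ := Option.eq_some_iff_get_eq.1 (h i)
      rw [h2]
    simp only [Option.join, eq_mp_eq_cast, cons.injEq, Sigma.mk.inj_iff, heq_eq_eq, rel.injEq,
      true_and]
    refine ⟨funext fun i => ?_, ?_⟩
    · obtain ⟨h1, h2⟩ := Option.eq_some_iff_get_eq.1 (h i)
      rw [cast_eq_iff_heq]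
      exact (Sigma.ext_iff.1 ((Sigma.eta (Option.get _ h1)).trans h2)).2
    rw [List.drop_append, length_map, length_finRange, Nat.sub_self, drop,
      drop_eq_nil_of_le, nil_append]
    rw [length_map, length_finRange]
  | imp _ _ ih1 ih2 =>
    rw [listEncode, List.append_assoc, cons_append, listDecode]
    simp only [ih1, ih2, length_cons, le_add_iff_nonneg_left, _root_.zero_le, ↓reduceDIte,
      getElem_cons_zero, getElem_cons_succ, sigmaImp_apply, drop_succ_cons, drop_zero]
  | all _ ih =>
    rw [listEncode, cons_append, listDecode]
    simp only [ih, length_cons, le_add_iff_nonneg_left, _root_.zero_le, ↓reduceDIte,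
      getElem_cons_zero, sigmaAll_apply, drop_succ_cons, drop_zero]

/-- The basic step in the code of a cons. -/
def stepFn (c m : ℕ) : ℕ := (Nat.pair c m) + 1

theorem computable_foldr_stepFn (cs : List ℕ) :
    Computable (fun n => cs.foldr stepFn n) := by
  induction cs with
  | nil => exact Computable.id
  | cons c cs ih =>
    have h : Primrec (fun m : ℕ => stepFn c m) :=
      Primrec.succ.comp (Primrec₂.natPair.comp (Primrec.const c) Primrec.id)
    exact (h.to_comp).comp ih

theorem encode_append_eq_foldr {β : Type*} [Encodable β] (P l : List β) :
    Encodable.encode (P ++ l) = (P.map Encodable.encode).foldr stepFn (Encodable.encode l) := by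
  induction P with
  | nil => simp
  | cons a P ih =>
    simp only [cons_append, Encodable.encode_list_cons, map_cons, foldr_cons, ih, stepFn,
      Nat.succ_eq_add_one]

theorem eq_append_of_encode_eq_foldr {β : Type*} [Encodable β] (P : List β) :
    ∀ (l : List β) (n : ℕ), Encodable.encode l = (P.map Encodable.encode).foldr stepFn n →
      ∃ l', l = P ++ l' ∧ Encodable.encode l' = n := by
  induction P with
  | nil => exact fun l n h => ⟨l, by simp, h⟩
  | cons a P ih =>
    rintro (_ | ⟨b, t⟩) n h
    · simp only [Encodable.encode_list_nil, map_cons, foldr_cons, stepFn] at h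
      omega
    · simp only [Encodable.encode_list_cons, map_cons, foldr_cons, stepFn,
        Nat.succ_eq_add_one, Nat.add_right_cancel_iff] at h
      have hp := Nat.pair_eq_pair.1 h
      have hb : b = a := Encodable.encode_injective hp.1
      obtain ⟨l', hl', hn⟩ := ih t n hp.2
      exact ⟨l', by rw [hb, hl', cons_append], hn⟩

section

variable [∀ n, Encodable (L.Functions n)] [∀ n, Encodable (L.Relations n)]

omit [∀ n, Encodable (L.Functions n)] [∀ n, Encodable (L.Relations n)] in
open FirstOrder.Language.BoundedFormula in
/-- If the encoding of a sentence `ψ` starts with the encoding prefix of an implication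
with antecedent `θ`, then `ψ` is such an implication. -/
theorem eq_imp_of_listEncode_eq (θ ψ : L.Sentence)
    (l' : List ((Σk, L.Term (Empty ⊕ Fin k)) ⊕ ((Σn, L.Relations n) ⊕ ℕ)))
    (h : listEncode ψ = (Sum.inr (Sum.inr 0) :: listEncode θ) ++ l') :
    ∃ φ : L.Sentence, ψ = θ.imp φ ∧ l' = listEncode φ := by
  rw [cons_append] at h
  cases ψ with
  | falsum => simp [listEncode] at h
  | equal t₁ t₂ => simp [listEncode] at h
  | rel R ts => simp [listEncode] at h
  | all φ => simp [listEncode] at h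
  | imp ψ₁ ψ₂ =>
    rw [listEncode, cons_append, cons.injEq] at h
    have h2 := h.2
    have hdec : listDecode (listEncode ψ₁ ++ listEncode ψ₂) =
        listDecode (listEncode θ ++ l') := by rw [h2]
    rw [aux_listDecode_append ⟨0, ψ₁⟩, aux_listDecode_append ⟨0, θ⟩,
      show listEncode ψ₂ = listEncode ψ₂ ++ [] by simp] at hdec
    rw [aux_listDecode_append ⟨0, ψ₂⟩] at hdec
    obtain ⟨hhead, -⟩ := List.cons_eq_cons.1 hdec
    have hψ₁ : ψ₁ = θ := eq_of_heq (Sigma.mk.inj_iff.1 hhead).2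
    subst hψ₁
    exact ⟨ψ₂, rfl, (List.append_cancel_left h2).symm⟩

omit [∀ n, Encodable (L.Functions n)] [∀ n, Encodable (L.Relations n)] in
/-- Realizing an implication of sentences. -/
theorem realize_sentence_imp {M : Type*} [L.Structure M] {φ ψ : L.Sentence} :
    M ⊨ (φ.imp ψ) ↔ (M ⊨ φ → M ⊨ ψ) :=
  FirstOrder.Language.BoundedFormula.realize_imp

/-- Let `L` be a first-order language with encodable sets of symbols, and
fix the induced encoding of `L`-sentences into `ℕ`.  Let `T` be an `L`-theory, and suppose
there is a sentence `θ ∈ T` such that the theory `Cn θ` of consequences of `θ` is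
essentially undecidable.  Then `T` is hereditarily undecidable: every `L`-theory `T'` with
`T' ⊆ T` is undecidable. -/
theorem hereditarily_undecidable_of_finitely_axiomatized_essentially_undecidable_subtheory
    (T : L.Theory) (hT : IsClosedTheory T)
    (θ : L.Sentence) (hθ : θ ∈ T) (hess : EssentiallyUndecidable (Cn θ)) :
    ∀ T' : L.Theory, IsClosedTheory T' → T' ⊆ T → ¬ DecidableSentenceSet T' := by
  classical
  intro T' hT' hsub hdec
  set T'' : L.Theory := {φ : L.Sentence | θ.imp φ ∈ T'} with hT''def
  -- every model of `T'` that satisfies `θ` is a model of `T''`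
  have hmodel : ∀ (M : Type _) [L.Structure M], M ⊨ T' → M ⊨ θ → M ⊨ T'' := by
    intro M _ hMT' hMθ
    haveI := hMT'
    refine (Theory.model_iff T'').2 fun φ hφ => ?_
    exact realize_sentence_imp.1 (T'.realize_sentence_of_mem hφ) hMθ
  -- `T''` is a closed theory
  have hclosed : IsClosedTheory T'' := by
    constructor
    · obtain ⟨M⟩ := hT.1
      have hMT' : (M : Type _) ⊨ T' := (Theory.model_iff T').2 fun φ hφ =>
        T.realize_sentence_of_mem (hsub hφ)
      have hMθ : (M : Type _) ⊨ θ := T.realize_sentence_of_mem hθ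
      haveI := hmodel M hMT' hMθ
      exact ⟨Theory.ModelType.of T'' M⟩
    · intro φ hφ
      refine hT'.2 (θ.imp φ) (Theory.models_sentence_iff.2 fun M => ?_)
      refine realize_sentence_imp.2 fun hMθ => ?_
      haveI := hmodel M M.is_model hMθ
      exact (Theory.models_sentence_iff.1 hφ (Theory.ModelType.of T'' M))
  -- `T''` contains `Cn θ`
  have hCn : Cn θ ⊆ T'' := by
    intro φ hφ
    refine hT'.2 (θ.imp φ) (Theory.models_sentence_iff.2 fun M => ?_)
    refine realize_sentence_imp.2 fun hMθ => ?_
    haveI : (M : Type _) ⊨ ({θ} : L.Theory) := (Theory.model_iff _).2 (by simpa using hMθ)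
    exact (Theory.models_sentence_iff.1 hφ (Theory.ModelType.of ({θ} : L.Theory) M))
  -- `T''` is decidable, contradicting essential undecidability of `Cn θ`
  refine hess T'' hclosed hCn ?_
  set P : List ((Σk, L.Term (Empty ⊕ Fin k)) ⊕ ((Σn, L.Relations n) ⊕ ℕ)) :=
    Sum.inr (Sum.inr 0) :: FirstOrder.Language.BoundedFormula.listEncode θ with hP
  set F : ℕ → ℕ := fun n => (P.map Encodable.encode).foldr stepFn n with hF
  have hFcomp : Computable F := computable_foldr_stepFn _
  have hkey : ∀ n : ℕ, n ∈ sentenceCode '' T'' ↔ F n ∈ sentenceCode '' T' := by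
    intro n
    constructor
    · rintro ⟨φ, hφ, rfl⟩
      refine ⟨θ.imp φ, hφ, ?_⟩
      show Encodable.encode (FirstOrder.Language.BoundedFormula.listEncode (θ.imp φ)) =
        (P.map Encodable.encode).foldr stepFn
          (Encodable.encode (FirstOrder.Language.BoundedFormula.listEncode φ))
      rw [← encode_append_eq_foldr]
      rfl
    · rintro ⟨ψ, hψ, hcode⟩
      rw [sentenceCode, hF] at hcode
      obtain ⟨l', hl', hn⟩ := eq_append_of_encode_eq_foldr P _ n hcode
      obtain ⟨φ, rfl, rfl⟩ := eq_imp_of_listEncode_eq θ ψ l' hl'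
      exact ⟨φ, hψ, hn.symm ▸ rfl⟩
  obtain ⟨_, hcomp⟩ := hdec
  refine ⟨fun n => Classical.dec _, ?_⟩
  have : Computable fun n => decide (F n ∈ sentenceCode '' T') := hcomp.comp hFcomp
  convert this using 2 with n
  exact decide_eq_decide.2 (hkey n)

end

end EssentialUndecidability
end
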